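/- Complexity of pairs: there exists a constant c such that K(x, y) ≤ K(x) + 2·log₂(K(x) + 1) + K(y) + c for all binary strings x and y. -/

import Mathlib

/-- Plain Kolmogorov complexity of `x` with respect to decompressor `D`. -/
noncomputable def Kc (D : List Bool →. List Bool) (x : List Bool) : ℕ∞ :=
  sInf {n : ℕ∞ | ∃ p : List Bool, x ∈ D p ∧ (p.length : ℕ∞) = n}

/-- `U` is an optimal decompressor. -/
def OptimalDecompressor (U : List Bool →. List Bool) : Prop :=
  Partrec U ∧ ∀ D : List Bool →. List Bool, Partrec D →
    ∃ c : ℕ, ∀ x : List Bool, Kc U x ≤ Kc D x + (c : ℕ∞)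

namespace CP

abbrev St := ℕ × ℕ × List Bool × List Bool

/-- State machine step for parsing a self-delimiting prefix code.
Modes: 0 = expecting first bit of a doubled digit pair, 1/2 = saw first bit
(false/true), 3 = past delimiter, consuming `n` bits into the first component
then the rest into the second, 4 = failure. -/
def step : St → Bool → St := fun s b =>
  if s.1 = 0 then ((cond b 2 1 : ℕ), s.2.1, s.2.2.1, s.2.2.2)
  else if s.1 = 1 then
    if b = true then (4, s.2.1, s.2.2.1, s.2.2.2) else (0, 2 * s.2.1, s.2.2.1, s.2.2.2)
  else if s.1 = 2 then
    if b = true then (0, 2 * s.2.1 + 1, s.2.2.1, s.2.2.2) else (3, s.2.1, s.2.2.1, s.2.2.2)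
  else if s.1 = 3 then
    if s.2.1 = 0 then (3, 0, s.2.2.1, s.2.2.2 ++ [b])
    else (3, s.2.1 - 1, s.2.2.1 ++ [b], s.2.2.2)
  else (4, s.2.1, s.2.2.1, s.2.2.2)

/-- Parse `dup (bits of n) ++ [true, false] ++ p ++ q` (with `|p| = n`) into `(p, q)`. -/
def parse (s : List Bool) : Option (List Bool × List Bool) :=
  let r := s.foldl step (0, 0, [], [])
  if r.1 = 3 ∧ r.2.1 = 0 then some (r.2.2.1, r.2.2.2) else none

theorem step_primrec : Primrec fun z : St × Bool => step z.1 z.2 := by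
  have m : Primrec fun z : St × Bool => z.1.1 := Primrec.fst.comp .fst
  have n : Primrec fun z : St × Bool => z.1.2.1 := Primrec.fst.comp (Primrec.snd.comp .fst)
  have p : Primrec fun z : St × Bool => z.1.2.2.1 :=
    Primrec.fst.comp (Primrec.snd.comp (Primrec.snd.comp .fst))
  have q : Primrec fun z : St × Bool => z.1.2.2.2 :=
    Primrec.snd.comp (Primrec.snd.comp (Primrec.snd.comp .fst))
  have b : Primrec fun z : St × Bool => z.2 := Primrec.snd
  exact Primrec.ite (Primrec.eq.comp m (.const 0))
    ((Primrec.cond b (.const 2) (.const 1)).pair (n.pair (p.pair q)))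
    (Primrec.ite (Primrec.eq.comp m (.const 1))
      (Primrec.ite (Primrec.eq.comp b (.const true))
        ((Primrec.const 4).pair (n.pair (p.pair q)))
        ((Primrec.const 0).pair ((Primrec.nat_mul.comp (.const 2) n).pair (p.pair q))))
      (Primrec.ite (Primrec.eq.comp m (.const 2))
        (Primrec.ite (Primrec.eq.comp b (.const true))
          ((Primrec.const 0).pair
            ((Primrec.nat_add.comp (Primrec.nat_mul.comp (.const 2) n) (.const 1)).pair
              (p.pair q)))
          ((Primrec.const 3).pair (n.pair (p.pair q))))
        (Primrec.ite (Primrec.eq.comp m (.const 3))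
          (Primrec.ite (Primrec.eq.comp n (.const 0))
            ((Primrec.const 3).pair ((Primrec.const 0).pair
              (p.pair (Primrec.list_append.comp q (Primrec.list_cons.comp b (.const []))))))
            ((Primrec.const 3).pair ((Primrec.nat_sub.comp n (.const 1)).pair
              ((Primrec.list_append.comp p (Primrec.list_cons.comp b (.const []))).pair q))))
          ((Primrec.const 4).pair (n.pair (p.pair q))))))

theorem parse_primrec : Primrec parse := by
  have hfold : Primrec fun s : List Bool => s.foldl step ((0, 0, [], []) : St) := by
    have := Primrec.list_foldl (Primrec.id (α := List Bool))
      (Primrec.const ((0, 0, [], []) : St)) (step_primrec.comp Primrec.snd).to₂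
    exact this.of_eq fun s => rfl
  have r1 : Primrec fun s : List Bool => (s.foldl step ((0,0,[],[]) : St)).1 :=
    Primrec.fst.comp hfold
  have r2 : Primrec fun s : List Bool => (s.foldl step ((0,0,[],[]) : St)).2.1 :=
    Primrec.fst.comp (Primrec.snd.comp hfold)
  have r3 : Primrec fun s : List Bool => (s.foldl step ((0,0,[],[]) : St)).2.2.1 :=
    Primrec.fst.comp (Primrec.snd.comp (Primrec.snd.comp hfold))
  have r4 : Primrec fun s : List Bool => (s.foldl step ((0,0,[],[]) : St)).2.2.2 :=
    Primrec.snd.comp (Primrec.snd.comp (Primrec.snd.comp hfold))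
  exact Primrec.ite ((Primrec.eq.comp r1 (.const 3)).and (Primrec.eq.comp r2 (.const 0)))
    (Primrec.option_some.comp (r3.pair r4)) (Primrec.const none)

/-- The decompressor for pairs. -/
def Dec (U : List Bool →. List Bool) (pr : List Bool × List Bool → List Bool) :
    List Bool →. List Bool := fun s =>
  (parse s : Part (List Bool × List Bool)).bind fun pq =>
    (U pq.1).bind fun a => (U pq.2).map fun b => pr (a, b)

theorem Dec_partrec {U : List Bool →. List Bool} {pr : List Bool × List Bool → List Bool}
    (hU : Partrec U) (hpr : Computable pr) : Partrec (Dec U pr) := by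
  have h1 : Partrec fun s : List Bool => (parse s : Part (List Bool × List Bool)) :=
    Computable.ofOption parse_primrec.to_comp
  refine h1.bind ?_
  have h2 : Partrec fun z : List Bool × (List Bool × List Bool) => U z.2.1 :=
    hU.comp (Computable.fst.comp Computable.snd)
  refine h2.bind ?_
  have h3 : Partrec fun w : (List Bool × (List Bool × List Bool)) × List Bool => U w.1.2.2 :=
    hU.comp (Computable.snd.comp (Computable.snd.comp Computable.fst))
  exact h3.map (hpr.comp ((Computable.snd.comp Computable.fst).pair Computable.snd)).to₂

/-- Duplicate each bit of a list. -/
def dup : List Bool → List Bool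
  | [] => []
  | b :: t => b :: b :: dup t

@[simp] lemma dup_length (l : List Bool) : (dup l).length = 2 * l.length := by
  induction l with
  | nil => rfl
  | cons b t ih => simp [dup, ih]; omega

lemma foldl_step_dup (ds : List Bool) (n : ℕ) (p q t : List Bool) :
    (dup ds ++ t).foldl step (0, n, p, q)
      = t.foldl step (0, ds.foldl (fun a b => 2 * a + cond b 1 0) n, p, q) := by
  induction ds generalizing n with
  | nil => rfl
  | cons b ds ih => cases b <;> simp [dup, step, ih]

lemma foldl_step_collect (r : List Bool) (p q : List Bool) :
    r.foldl step (3, 0, p, q) = (3, 0, p, q ++ r) := by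
  induction r generalizing q with
  | nil => simp
  | cons b r ih => simpa [step] using ih (q ++ [b])

lemma foldl_step_consume (p acc q r : List Bool) :
    (p ++ r).foldl step (3, p.length, acc, q) = r.foldl step (3, 0, acc ++ p, q) := by
  induction p generalizing acc with
  | nil => simp
  | cons b p ih => simpa [step] using ih (acc ++ [b])

lemma val_bits (m : ℕ) : m.bits.reverse.foldl (fun a b => 2 * a + cond b 1 0) 0 = m := by
  rw [List.foldl_reverse]
  induction m using Nat.binaryRec' with
  | zero => simp
  | bit b n h ih =>
      rw [Nat.bits_append_bit n b h]
      simp [ih, Nat.bit_val]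
      cases b <;> simp

lemma parse_enc (p q : List Bool) :
    parse (dup p.length.bits.reverse ++ [true, false] ++ (p ++ q)) = some (p, q) := by
  have h1 : (dup p.length.bits.reverse ++ [true, false] ++ (p ++ q)).foldl step (0, 0, [], [])
      = (3, 0, p, q) := by
    rw [List.append_assoc, foldl_step_dup, val_bits]
    show (p ++ q).foldl step (step (step (0, p.length, [], []) true) false) = _
    have h2 : step (step ((0 : ℕ), p.length, ([] : List Bool), ([] : List Bool)) true) false
        = (3, p.length, [], []) := by simp [step]
    rw [h2, foldl_step_consume, foldl_step_collect]
    simp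
  simp only [parse]
  rw [h1]
  simp

theorem Kc_le {D : List Bool →. List Bool} {x p : List Bool} (h : x ∈ D p) :
    Kc D x ≤ (p.length : ℕ∞) := sInf_le ⟨p, h, rfl⟩

theorem Kc_ne_top {U : List Bool →. List Bool} (hU : OptimalDecompressor U) (x : List Bool) :
    Kc U x ≠ ⊤ := by
  obtain ⟨c, hc⟩ := hU.2 (fun l => Part.some l) Computable.id.partrec
  have h1 : Kc (fun l => Part.some l) x ≤ (x.length : ℕ∞) := Kc_le (Part.mem_some x)
  have h2 : Kc U x ≤ ((x.length + c : ℕ) : ℕ∞) := by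
    push_cast
    exact (hc x).trans (add_le_add h1 le_rfl)
  intro h
  rw [h] at h2
  simp [top_le_iff] at h2

theorem Kc_exists {D : List Bool →. List Bool} {x : List Bool} (h : Kc D x ≠ ⊤) :
    ∃ p, x ∈ D p ∧ (p.length : ℕ∞) = Kc D x := by
  classical
  have hne : {n : ℕ∞ | ∃ p, x ∈ D p ∧ (p.length : ℕ∞) = n}.Nonempty := by
    by_contra hne
    rw [Set.not_nonempty_iff_eq_empty] at hne
    exact h (by unfold Kc; rw [hne, sInf_empty])
  obtain ⟨_, p0, hp0, rfl⟩ := hne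
  have hT : {n : ℕ | ∃ p : List Bool, x ∈ D p ∧ p.length = n}.Nonempty :=
    ⟨p0.length, p0, hp0, rfl⟩
  obtain ⟨p, hp, hplen⟩ := Nat.sInf_mem hT
  refine ⟨p, hp, ?_⟩
  have hle : Kc D x ≤ (p.length : ℕ∞) := Kc_le hp
  have hge : (p.length : ℕ∞) ≤ Kc D x := by
    apply le_sInf
    rintro b ⟨r, hr, rfl⟩
    have : sInf {n : ℕ | ∃ p : List Bool, x ∈ D p ∧ p.length = n} ≤ r.length :=
      Nat.sInf_le ⟨r, hr, rfl⟩
    exact_mod_cast hplen ▸ this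
  exact le_antisymm hge hle

end CP

/-- Complexity of pairs: `K(x, y) ≤ K(x) + 2 log₂(K(x)+1) + K(y) + c`, where
`K(x, y) = K([x, y])` for a fixed computable injective pairing `pair`.
(Optimality of `U` guarantees that `K` is everywhere finite, so the
natural-number value `(Kc U x).toNat` is the complexity `K(x)`.) -/
theorem complexity_of_pairs
    (U : List Bool →. List Bool) (hU : OptimalDecompressor U)
    (pair : List Bool × List Bool → List Bool)
    (hpair : Computable pair) (hinj : Function.Injective pair) :
    ∃ c : ℕ, ∀ x y : List Bool,
      Kc U (pair (x, y)) ≤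
        Kc U x + Kc U y +
          ((2 * Nat.log 2 ((Kc U x).toNat + 1) + c : ℕ) : ℕ∞) := by
  obtain ⟨c₁, hc₁⟩ := hU.2 (CP.Dec U pair) (CP.Dec_partrec hU.1 hpair)
  refine ⟨c₁ + 4, fun x y => ?_⟩
  obtain ⟨p, hp, hplen⟩ := CP.Kc_exists (CP.Kc_ne_top hU x)
  obtain ⟨q, hq, hqlen⟩ := CP.Kc_exists (CP.Kc_ne_top hU y)
  set e := CP.dup p.length.bits.reverse ++ [true, false] ++ (p ++ q) with he
  have hpe : CP.parse e = some (p, q) := CP.parse_enc p q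
  have hDe : CP.Dec U pair e = (U p).bind fun a => (U q).map fun b => pair (a, b) := by
    simp [CP.Dec, hpe]
  have hmem : pair (x, y) ∈ CP.Dec U pair e := by
    rw [hDe, Part.mem_bind_iff]
    refine ⟨x, hp, ?_⟩
    rw [Part.mem_map_iff]
    exact ⟨y, hq, rfl⟩
  have h1 : Kc (CP.Dec U pair) (pair (x, y)) ≤ (e.length : ℕ∞) := CP.Kc_le hmem
  have hsize : p.length.bits.length ≤ Nat.log 2 (p.length + 1) + 1 := by
    rw [Nat.size_eq_bits_len]
    exact Nat.size_le.2 ((Nat.lt_succ_self _).trans (Nat.lt_pow_succ_log_self (by norm_num) _))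
  have hlen : e.length + c₁ ≤ p.length + q.length + (2 * Nat.log 2 (p.length + 1) + (c₁ + 4)) := by
    simp [he]
    set L := Nat.log 2 (p.length + 1)
    omega
  calc Kc U (pair (x, y)) ≤ Kc (CP.Dec U pair) (pair (x, y)) + (c₁ : ℕ∞) := hc₁ _
    _ ≤ (e.length : ℕ∞) + (c₁ : ℕ∞) := add_le_add h1 le_rfl
    _ = ((e.length + c₁ : ℕ) : ℕ∞) := by rw [Nat.cast_add]
    _ ≤ ((p.length + q.length + (2 * Nat.log 2 (p.length + 1) + (c₁ + 4)) : ℕ) : ℕ∞) := by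
        exact_mod_cast hlen
    _ = Kc U x + Kc U y + ((2 * Nat.log 2 ((Kc U x).toNat + 1) + (c₁ + 4) : ℕ) : ℕ∞) := by
        rw [← hplen, ← hqlen]
        simp only [ENat.toNat_coe]
        push_cast
        ring
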